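/- (Torus invariants of the chart of the Grassmannian.) Fix m ≥ 2, and let A be the localization of the polynomial ring ℂ[u_2,…,u_m, v_{m+1},…,v_{2m−1}] at the multiplicative set generated by the elements u_i v_j − 1, for 2 ≤ i ≤ m and m+1 ≤ j ≤ 2m−1. Give A the ℤ-grading determined by deg u_i = −1 and deg v_j = +1 (this is well defined since each u_i v_j − 1 is homogeneous of degree 0). Then the degree-0 homogeneous component of A equals the ℂ-subalgebra of A generated by the elements u_i v_j together with the elements (u_i v_j − 1)^{-1}, for 2 ≤ i ≤ m and m+1 ≤ j ≤ 2m−1. -/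
import Mathlib


open MvPolynomial

/-- The polynomial ring `ℂ[u_2,…,u_m, v_{m+1},…,v_{2m−1}]` in `2(m−1)` variables:
`Sum.inl i` is the `u`-variable `u_{i+2}` and `Sum.inr j` is the `v`-variable
`v_{m+1+j}`. -/
abbrev BRing (m : ℕ) := MvPolynomial (Fin (m - 1) ⊕ Fin (m - 1)) ℂ

/-- The multiplicative set generated by the elements `u_i v_j − 1`. -/
noncomputable def uvSubmonoid (m : ℕ) : Submonoid (BRing m) :=
  Submonoid.closure
    {q | ∃ (i j : Fin (m - 1)), q = X (Sum.inl i) * X (Sum.inr j) - 1}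

/-- `A`: the localization of `ℂ[u_2,…,u_m, v_{m+1},…,v_{2m−1}]` at the multiplicative
set generated by the `u_i v_j − 1`. -/
abbrev ARing (m : ℕ) := Localization (uvSubmonoid m)

/-- The weight (`ℤ`-degree) of a monomial exponent, determined by `deg u_i = −1` and
`deg v_j = +1`. -/
def monWeight (m : ℕ) (σ : Fin (m - 1) ⊕ Fin (m - 1) →₀ ℕ) : ℤ :=
  σ.sum (fun s k => Sum.elim (fun _ => -(k : ℤ)) (fun _ => (k : ℤ)) s)

/-- A polynomial in the `u`s and `v`s is homogeneous of degree `0` for the grading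
`deg u_i = −1`, `deg v_j = +1` if all its monomials have weight `0`. -/
def IsWeightZero (m : ℕ) (x : BRing m) : Prop :=
  ∀ σ ∈ x.support, monWeight m σ = 0

/-- The degree-`0` homogeneous component of `A` for the grading determined by
`deg u_i = −1` and `deg v_j = +1` (well defined as each `u_i v_j − 1` is homogeneous of
degree `0`): an element of `A` lies in it iff it can be written as `x / s` with `s` in
the multiplicative set and `x` homogeneous of degree `0`. -/
def degreeZeroPart (m : ℕ) : Set (ARing m) :=
  {a | ∃ (x : BRing m) (s : uvSubmonoid m),
    IsWeightZero m x ∧ a * algebraMap (BRing m) (ARing m) s.val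
      = algebraMap (BRing m) (ARing m) x}


set_option synthInstance.maxHeartbeats 1000000

namespace TorusAux

variable {m : ℕ}

lemma monWeight_eq (σ : Fin (m - 1) ⊕ Fin (m - 1) →₀ ℕ) :
    monWeight m σ = (∑ j, (σ (Sum.inr j) : ℤ)) - ∑ i, (σ (Sum.inl i) : ℤ) := by
  rw [monWeight, Finsupp.sum_fintype]
  · rw [Fintype.sum_sum_type]; simp; ring
  · intro s; cases s <;> simp

lemma monWeight_add (σ τ : Fin (m - 1) ⊕ Fin (m - 1) →₀ ℕ) :
    monWeight m (σ + τ) = monWeight m σ + monWeight m τ := by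
  simp only [monWeight_eq, Finsupp.add_apply]
  push_cast
  rw [Finset.sum_add_distrib, Finset.sum_add_distrib]
  ring

lemma isWeightZero_mul {x y : BRing m} (hx : IsWeightZero m x) (hy : IsWeightZero m y) :
    IsWeightZero m (x * y) := by
  intro σ hσ
  obtain ⟨a, ha, b, hb, hab⟩ := Finset.mem_add.mp (MvPolynomial.support_mul x y hσ)
  rw [← hab, monWeight_add, hx a ha, hy b hb, add_zero]

lemma isWeightZero_add {x y : BRing m} (hx : IsWeightZero m x) (hy : IsWeightZero m y) :
    IsWeightZero m (x + y) := by
  intro σ hσ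
  rcases Finset.mem_union.mp (MvPolynomial.support_add hσ) with h | h
  · exact hx σ h
  · exact hy σ h

lemma isWeightZero_C (c : ℂ) : IsWeightZero m (C c : BRing m) := by
  intro σ hσ
  rw [MvPolynomial.mem_support_iff, MvPolynomial.coeff_C] at hσ
  by_cases h : σ = 0
  · subst h; simp [monWeight]
  · simp [Ne.symm h] at hσ

lemma isWeightZero_one : IsWeightZero m (1 : BRing m) := by
  simpa using isWeightZero_C (m := m) 1

lemma isWeightZero_zero : IsWeightZero m (0 : BRing m) := by
  simpa using isWeightZero_C (m := m) 0

lemma X_mul_X (i j : Fin (m - 1)) :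
    (X (Sum.inl i) * X (Sum.inr j) : BRing m)
      = monomial (Finsupp.single (Sum.inl i) 1 + Finsupp.single (Sum.inr j) 1) 1 := by
  rw [MvPolynomial.X, MvPolynomial.X, MvPolynomial.monomial_mul, one_mul]

lemma monWeight_pair (i j : Fin (m - 1)) :
    monWeight m (Finsupp.single (Sum.inl i) 1 + Finsupp.single (Sum.inr j) 1) = 0 := by
  rw [monWeight_eq]
  simp [Finsupp.single_apply, Finset.sum_ite_eq']

lemma isWeightZero_uv (i j : Fin (m - 1)) :
    IsWeightZero m (X (Sum.inl i) * X (Sum.inr j) : BRing m) := by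
  intro σ hσ
  rw [X_mul_X] at hσ
  rw [MvPolynomial.support_monomial] at hσ
  simp only [one_ne_zero, if_neg, ite_false, Finset.mem_singleton] at hσ
  subst hσ
  exact monWeight_pair i j

lemma isWeightZero_gen (i j : Fin (m - 1)) :
    IsWeightZero m (X (Sum.inl i) * X (Sum.inr j) - 1 : BRing m) := by
  have := isWeightZero_add (isWeightZero_uv (m := m) i j) (isWeightZero_C (-1))
  simpa [sub_eq_add_neg, map_neg] using this

lemma isWeightZero_of_mem {s : BRing m} (hs : s ∈ uvSubmonoid m) : IsWeightZero m s := by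
  induction hs using Submonoid.closure_induction with
  | mem q hq => obtain ⟨i, j, rfl⟩ := hq; exact isWeightZero_gen i j
  | one => exact isWeightZero_one
  | mul a b _ _ ha hb => exact isWeightZero_mul ha hb

/-- The degree-zero part as a subalgebra. -/
noncomputable def D (m : ℕ) : Subalgebra ℂ (ARing m) where
  carrier := degreeZeroPart m
  mul_mem' := by
    rintro a b ⟨x, s, hx, hax⟩ ⟨y, t, hy, hby⟩
    refine ⟨x * y, s * t, isWeightZero_mul hx hy, ?_⟩
    simp only [Submonoid.coe_mul, map_mul]
    calc a * b * (algebraMap (BRing m) (ARing m) s.val * algebraMap (BRing m) (ARing m) t.val)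
        = (a * algebraMap (BRing m) (ARing m) s.val) * (b * algebraMap (BRing m) (ARing m) t.val) := by
          ring
      _ = _ := by rw [hax, hby]
  add_mem' := by
    rintro a b ⟨x, s, hx, hax⟩ ⟨y, t, hy, hby⟩
    refine ⟨x * t.val + y * s.val, s * t,
      isWeightZero_add (isWeightZero_mul hx (isWeightZero_of_mem t.2))
        (isWeightZero_mul hy (isWeightZero_of_mem s.2)), ?_⟩
    simp only [Submonoid.coe_mul, map_mul, map_add]
    calc (a + b) * (algebraMap (BRing m) (ARing m) s.val * algebraMap (BRing m) (ARing m) t.val)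
        = (a * algebraMap (BRing m) (ARing m) s.val) * algebraMap (BRing m) (ARing m) t.val
          + (b * algebraMap (BRing m) (ARing m) t.val) * algebraMap (BRing m) (ARing m) s.val := by
          ring
      _ = _ := by rw [hax, hby]
  one_mem' := ⟨1, 1, isWeightZero_one, by simp⟩
  zero_mem' := ⟨0, 1, isWeightZero_zero, by simp⟩
  algebraMap_mem' := by
    intro r
    refine ⟨C r, 1, isWeightZero_C r, ?_⟩
    rw [IsScalarTower.algebraMap_apply ℂ (BRing m) (ARing m), MvPolynomial.algebraMap_eq]
    simp

/-- The generating set of the adjoin. -/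
def genSet (m : ℕ) : Set (ARing m) :=
  {a | ∃ (i j : Fin (m - 1)),
      a = algebraMap (BRing m) (ARing m) (X (Sum.inl i) * X (Sum.inr j))} ∪
  {a | ∃ (i j : Fin (m - 1)),
      a * algebraMap (BRing m) (ARing m) (X (Sum.inl i) * X (Sum.inr j) - 1) = 1}

lemma monomial_mem (n : ℕ) : ∀ (σ : Fin (m - 1) ⊕ Fin (m - 1) →₀ ℕ) (c : ℂ),
    (∑ i, σ (Sum.inl i)) = n → monWeight m σ = 0 →
    algebraMap (BRing m) (ARing m) (monomial σ c) ∈ Algebra.adjoin ℂ (genSet m) := by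
  induction n with
  | zero =>
    intro σ c hn hw
    have hσ : σ = 0 := by
      have hinr : (∑ j, (σ (Sum.inr j) : ℤ)) = 0 := by
        rw [monWeight_eq] at hw
        have : (∑ i, (σ (Sum.inl i) : ℤ)) = 0 := by exact_mod_cast hn
        omega
      have hinr' : ∀ j, σ (Sum.inr j) = 0 := by
        intro j
        have := Finset.sum_eq_zero_iff_of_nonneg (fun i _ => Int.natCast_nonneg _) |>.mp hinr
          j (Finset.mem_univ j)
        exact_mod_cast this
      have hinl' : ∀ i, σ (Sum.inl i) = 0 := by
        intro i
        exact (Finset.sum_eq_zero_iff.mp hn) i (Finset.mem_univ i)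
      ext s
      cases s with
      | inl i => simp [hinl' i]
      | inr j => simp [hinr' j]
    subst hσ
    rw [monomial_zero', ← MvPolynomial.algebraMap_eq,
      ← IsScalarTower.algebraMap_apply ℂ (BRing m) (ARing m)]
    exact Subalgebra.algebraMap_mem _ c
  | succ n ih =>
    intro σ c hn hw
    have hex_i : ∃ i, σ (Sum.inl i) ≠ 0 := by
      by_contra h
      push_neg at h
      simp [h] at hn
    obtain ⟨i, hi⟩ := hex_i
    have hex_j : ∃ j, σ (Sum.inr j) ≠ 0 := by
      by_contra h
      push_neg at h
      rw [monWeight_eq] at hw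
      simp only [h, Nat.cast_zero, Finset.sum_const_zero, zero_sub, neg_eq_zero] at hw
      have : (∑ i, (σ (Sum.inl i) : ℤ)) = ((n + 1 : ℕ) : ℤ) := by exact_mod_cast hn
      omega
    obtain ⟨j, hj⟩ := hex_j
    set δ : Fin (m - 1) ⊕ Fin (m - 1) →₀ ℕ :=
      Finsupp.single (Sum.inl i) 1 + Finsupp.single (Sum.inr j) 1 with hδ
    set τ : Fin (m - 1) ⊕ Fin (m - 1) →₀ ℕ := σ - δ with hτ
    have hστ : σ = τ + δ := by
      ext s
      have h1 : δ s ≤ σ s := by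
        rcases s with s | s <;>
          simp only [hδ, Finsupp.add_apply, Finsupp.single_apply] <;>
          split_ifs with h h' <;>
          simp_all <;> omega
      simp only [hτ, Finsupp.tsub_apply, Finsupp.add_apply]
      omega
    have hδinl : (∑ i', δ (Sum.inl i')) = 1 := by
      simp [hδ, Finsupp.add_apply, Finsupp.single_apply, Finset.sum_ite_eq']
    have hτn : (∑ i', τ (Sum.inl i')) = n := by
      have := hn
      rw [hστ] at this
      simp only [Finsupp.add_apply, Finset.sum_add_distrib, hδinl] at this
      omega
    have hτw : monWeight m τ = 0 := by
      have h0 := monWeight_pair (m := m) i j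
      have : monWeight m σ = monWeight m τ + monWeight m δ := by
        rw [hστ]
        rw [monWeight_eq, monWeight_eq, monWeight_eq]
        simp only [Finsupp.add_apply]
        push_cast
        rw [Finset.sum_add_distrib, Finset.sum_add_distrib]
        ring
      have hδ0 : monWeight m δ = 0 := by rw [hδ]; exact h0
      omega
    have hmono : (monomial σ c : BRing m)
        = monomial τ c * (X (Sum.inl i) * X (Sum.inr j)) := by
      rw [X_mul_X, MvPolynomial.monomial_mul, mul_one, ← hστ]
    rw [hmono, map_mul]
    exact mul_mem (ih τ c hτn hτw)
      (Algebra.subset_adjoin (Or.inl ⟨i, j, rfl⟩))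

lemma weightZero_mem {x : BRing m} (hx : IsWeightZero m x) :
    algebraMap (BRing m) (ARing m) x ∈ Algebra.adjoin ℂ (genSet m) := by
  rw [MvPolynomial.as_sum x, map_sum]
  exact Subalgebra.sum_mem _ fun σ hσ =>
    monomial_mem _ σ _ rfl (hx σ hσ)

lemma inv_mem {s : BRing m} (hs : s ∈ uvSubmonoid m) :
    ∃ b ∈ Algebra.adjoin ℂ (genSet m),
      algebraMap (BRing m) (ARing m) s * b = 1 := by
  induction hs using Submonoid.closure_induction with
  | mem q hq =>
    obtain ⟨i, j, rfl⟩ := hq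
    have hu : IsUnit (algebraMap (BRing m) (ARing m)
        (X (Sum.inl i) * X (Sum.inr j) - 1)) :=
      IsLocalization.map_units (M := uvSubmonoid m) (ARing m)
        ⟨_, Submonoid.subset_closure ⟨i, j, rfl⟩⟩
    obtain ⟨u, hu⟩ := hu
    refine ⟨↑u⁻¹, Algebra.subset_adjoin (Or.inr ⟨i, j, ?_⟩), ?_⟩
    · rw [← hu]; exact u.inv_mul
    · rw [← hu]; exact u.mul_inv
  | one => exact ⟨1, one_mem _, by simp⟩
  | mul a b ha hb iha ihb =>
    obtain ⟨ba, hba, hba1⟩ := iha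
    obtain ⟨bb, hbb, hbb1⟩ := ihb
    refine ⟨ba * bb, mul_mem hba hbb, ?_⟩
    rw [map_mul]
    calc algebraMap (BRing m) (ARing m) a * algebraMap (BRing m) (ARing m) b * (ba * bb)
        = (algebraMap (BRing m) (ARing m) a * ba) * (algebraMap (BRing m) (ARing m) b * bb) := by
          ring
      _ = 1 := by rw [hba1, hbb1, mul_one]

lemma genSet_subset_D : genSet m ⊆ (D m : Set (ARing m)) := by
  rintro b (⟨i, j, rfl⟩ | ⟨i, j, hb⟩)
  · exact ⟨X (Sum.inl i) * X (Sum.inr j), 1, isWeightZero_uv i j, by simp⟩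
  · exact ⟨1, ⟨_, Submonoid.subset_closure ⟨i, j, rfl⟩⟩, isWeightZero_one, by
      rw [map_one]; exact hb⟩

end TorusAux

/-- **Torus invariants of the chart of the Grassmannian.** For `m ≥ 2`, the degree-`0`
homogeneous component of `A` (graded by `deg u_i = −1`, `deg v_j = +1`) equals the
`ℂ`-subalgebra of `A` generated by the elements `u_i v_j` together with the elements
`(u_i v_j − 1)⁻¹`. -/
theorem degree_zero_part_eq_adjoin (m : ℕ) (hm : 2 ≤ m) :
    degreeZeroPart m =
      (Algebra.adjoin ℂ
        ({a | ∃ (i j : Fin (m - 1)),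
            a = algebraMap (BRing m) (ARing m) (X (Sum.inl i) * X (Sum.inr j))} ∪
         {a | ∃ (i j : Fin (m - 1)),
            a * algebraMap (BRing m) (ARing m) (X (Sum.inl i) * X (Sum.inr j) - 1) = 1})
        : Set (ARing m)) := by
  apply Set.Subset.antisymm
  · rintro a ⟨x, s, hx, hax⟩
    obtain ⟨b, hb, hsb⟩ := TorusAux.inv_mem s.2
    have ha : a = algebraMap (BRing m) (ARing m) x * b := by
      calc a = a * (algebraMap (BRing m) (ARing m) s.val * b) := by rw [hsb, mul_one]
        _ = (a * algebraMap (BRing m) (ARing m) s.val) * b := by ring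
        _ = _ := by rw [hax]
    rw [ha]
    exact mul_mem (TorusAux.weightZero_mem hx) hb
  · intro a ha
    have h : Algebra.adjoin ℂ (TorusAux.genSet m) ≤ TorusAux.D m :=
      Algebra.adjoin_le TorusAux.genSet_subset_D
    exact h ha
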